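/- Let k ≥ 1 and let H_0, …, H_{k−1} ⊆ ℕ be thick sets. Then the set A := ⋃_{i=0}^{k−1} ({m ∈ ℕ : m ≡ i (mod k)} ∩ H_i) is dynamically thick. -/

import Mathlib

/-- `S ⊆ ℕ` is thick if every finite subset of `ℕ` has a translate inside `S`. -/
def Thick (S : Set ℕ) : Prop :=
  ∀ F : Finset ℕ, ∃ n : ℕ, 0 < n ∧ ∀ f ∈ F, f + n ∈ S

/-- A topological dynamical system: a nonempty compact metric space together with a
continuous self-map. -/
structure MetricDynSystem where
  carrier : Type
  [metric : MetricSpace carrier]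
  [cpt : CompactSpace carrier]
  [carrier_nonempty : Nonempty carrier]
  map : carrier → carrier
  continuous_map : Continuous map

attribute [instance] MetricDynSystem.metric MetricDynSystem.cpt MetricDynSystem.carrier_nonempty

/-- A system is minimal if every point has dense forward orbit `{T^n x : n ∈ ℕ}`. -/
def MetricDynSystem.Minimal (S : MetricDynSystem) : Prop :=
  ∀ x : S.carrier, Dense {y : S.carrier | ∃ n : ℕ, 0 < n ∧ S.map^[n] x = y}

/-- `A` is dynamically thick: for every minimal system, every point `x` and every
nonempty open `U`, some `n ∈ A` has `T^n x ∈ U`. -/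
def DynThick (A : Set ℕ) : Prop :=
  ∀ S : MetricDynSystem, S.Minimal →
    ∀ (x : S.carrier) (U : Set S.carrier), IsOpen U → U.Nonempty →
      ∃ n ∈ A, 0 < n ∧ S.map^[n] x ∈ U

theorem dynThick_of_residues_inter_thick (k : ℕ) (hk : 1 ≤ k)
    (H : Fin k → Set ℕ) (hH : ∀ i, Thick (H i)) :
    DynThick (⋃ i : Fin k, ({m : ℕ | m % k = (i : ℕ)} ∩ H i)) := by
  intro S hmin x U hU hUne
  haveI : NeZero k := ⟨by omega⟩
  letI : TopologicalSpace (ZMod k) := ⊥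
  haveI : DiscreteTopology (ZMod k) := ⟨rfl⟩
  obtain ⟨u, hu⟩ := hUne
  -- the product system
  let G : S.carrier × ZMod k → S.carrier × ZMod k := fun p => (S.map p.1, p.2 + 1)
  have hGcont : Continuous G :=
    (S.continuous_map.comp continuous_fst).prodMk
      ((continuous_of_discreteTopology (f := fun b : ZMod k => b + 1)).snd')
  have hGiter : ∀ (n : ℕ) (p : S.carrier × ZMod k), G^[n] p = (S.map^[n] p.1, p.2 + n) := by
    intro n
    induction n with
    | zero => intro p; simp
    | succ n ih =>
      intro p
      rw [Function.iterate_succ_apply', ih, Function.iterate_succ_apply']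
      show (S.map (S.map^[n] p.1), p.2 + (n : ZMod k) + 1) = _
      congr 1
      push_cast
      ring
  -- forward orbits in the product
  let orb : S.carrier × ZMod k → Set (S.carrier × ZMod k) := fun w => {q | ∃ n, 0 < n ∧ G^[n] w = q}
  have horb_inv : ∀ w, ∀ q ∈ orb w, G q ∈ orb w := by
    rintro w q ⟨n, hn, rfl⟩
    exact ⟨n + 1, by omega, by rw [Function.iterate_succ_apply']⟩
  have hcl_inv : ∀ w, ∀ q ∈ closure (orb w), G q ∈ closure (orb w) := by
    intro w q hq
    have h1 : G '' closure (orb w) ⊆ closure (G '' orb w) :=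
      image_closure_subset_closure_image hGcont
    have h2 : G '' orb w ⊆ orb w := by
      rintro _ ⟨q', hq', rfl⟩; exact horb_inv w q' hq'
    exact closure_mono h2 (h1 ⟨q, hq, rfl⟩)
  have horb_mem : ∀ w, ∀ C : Set (S.carrier × ZMod k), (∀ q ∈ C, G q ∈ C) → w ∈ C →
      ∀ n : ℕ, G^[n] w ∈ C := by
    intro w C hCinv hw n
    induction n with
    | zero => simpa using hw
    | succ n ih => rw [Function.iterate_succ_apply']; exact hCinv _ ih
  -- every nonempty closed invariant set projects onto all of X
  have hproj : ∀ C : Set (S.carrier × ZMod k), IsClosed C → (∀ q ∈ C, G q ∈ C) → C.Nonempty →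
      ∀ a : S.carrier, ∃ b : ZMod k, (a, b) ∈ C := by
    rintro C hCcl hCinv ⟨p, hp⟩ a
    have hDcl : IsClosed (Prod.fst '' C) :=
      (hCcl.isCompact.image continuous_fst).isClosed
    have hsub : {y : S.carrier | ∃ n, 0 < n ∧ S.map^[n] p.1 = y} ⊆ Prod.fst '' C := by
      rintro y ⟨n, hn, rfl⟩
      refine ⟨G^[n] p, horb_mem p C hCinv hp n, ?_⟩
      rw [hGiter]
    have hdense := hmin p.1
    have haD : a ∈ Prod.fst '' C := by
      have : a ∈ closure {y : S.carrier | ∃ n, 0 < n ∧ S.map^[n] p.1 = y} := by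
        rw [hdense.closure_eq]; trivial
      have := closure_mono hsub this
      rwa [hDcl.closure_eq] at this
    obtain ⟨q, hq, hq1⟩ := haD
    exact ⟨q.2, by rwa [← hq1, Prod.mk.eta]⟩
  -- the orbit closure of z = (x, 0)
  set z : S.carrier × ZMod k := (x, (0 : ZMod k)) with hz
  set W : Set (S.carrier × ZMod k) := closure (orb z) with hW
  have hWcl : IsClosed W := isClosed_closure
  have hWinv : ∀ q ∈ W, G q ∈ W := hcl_inv z
  have hWne : W.Nonempty := ⟨G^[1] z, subset_closure ⟨1, one_pos, rfl⟩⟩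
  -- minimality of W
  have hWmin : ∀ w ∈ W, W ⊆ closure (orb w) := by
    intro w hw
    set C : Set (S.carrier × ZMod k) := closure (orb w) with hC
    have hCcl : IsClosed C := isClosed_closure
    have hCinv : ∀ q ∈ C, G q ∈ C := hcl_inv w
    have hCW : C ⊆ W := by
      apply hWcl.closure_subset_iff.mpr
      rintro _ ⟨n, hn, rfl⟩
      exact horb_mem w W hWinv hw n
    have hCne : C.Nonempty := ⟨G^[1] w, subset_closure ⟨1, one_pos, rfl⟩⟩
    obtain ⟨i, hi⟩ := hproj C hCcl hCinv hCne x
    -- the translation map φ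
    let φ : S.carrier × ZMod k → S.carrier × ZMod k := fun p => (p.1, p.2 + i)
    have hφcont : Continuous φ :=
      continuous_fst.prodMk ((continuous_of_discreteTopology (f := fun b : ZMod k => b + i)).snd')
    -- φ '' orb z ⊆ orb (x, i) ⊆ C
    have hφorb : φ '' orb z ⊆ orb (x, i) := by
      rintro _ ⟨_, ⟨n, hn, rfl⟩, rfl⟩
      refine ⟨n, hn, ?_⟩
      rw [hGiter, hGiter]
      show ((S.map^[n] x : S.carrier), (i : ZMod k) + n) = (S.map^[n] x, 0 + n + i)
      congr 1
      ring
    have horbxiC : orb (x, i) ⊆ C := by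
      rintro _ ⟨n, hn, rfl⟩
      exact horb_mem (x, i) C hCinv hi n
    have hφW : ∀ p ∈ W, φ p ∈ C := by
      intro p hp
      have h1 : φ '' W ⊆ closure (φ '' orb z) := image_closure_subset_closure_image hφcont
      have h2 : closure (φ '' orb z) ⊆ C := by
        apply hCcl.closure_subset_iff.mpr
        exact fun q hq => horbxiC (hφorb hq)
      exact h2 (h1 ⟨p, hp, rfl⟩)
    -- iterate φ
    have hiter : ∀ m : ℕ, ∀ p ∈ W, (p.1, p.2 + ((m : ZMod k) + 1) * i) ∈ C := by
      intro m
      induction m with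
      | zero =>
        intro p hp
        have := hφW p hp
        simpa using this
      | succ m ih =>
        intro p hp
        have h1 := ih p hp
        have h2 := hφW _ (hCW h1)
        show (p.1, p.2 + (((m + 1 : ℕ) : ZMod k) + 1) * i) ∈ C
        push_cast
        have heq : p.2 + ((m : ZMod k) + 1 + 1) * i = p.2 + ((m : ZMod k) + 1) * i + i := by ring
        rw [heq]
        exact h2
    intro p hp
    have hkey := hiter (k - 1) p hp
    have hcast : ((k - 1 : ℕ) : ZMod k) + 1 = 0 := by
      have : (((k - 1 : ℕ) + 1 : ℕ) : ZMod k) = 0 := by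
        rw [Nat.sub_add_cancel hk]
        exact ZMod.natCast_self k
      push_cast at this
      linear_combination this
    rw [hcast] at hkey
    simpa using hkey
  -- pick the residue class that lands in U
  obtain ⟨j0, hj0⟩ := hproj W hWcl hWinv hWne u
  set V : Set (S.carrier × ZMod k) := U ×ˢ ({j0} : Set (ZMod k)) with hV
  have hVopen : IsOpen V := hV ▸ hU.prod (isOpen_discrete ({j0} : Set (ZMod k)))
  -- every point of W enters V in bounded time
  have hcover : W ⊆ ⋃ n : ℕ, G^[n + 1] ⁻¹' V := by
    intro w hw
    have hdd : (u, j0) ∈ closure (orb w) := hWmin w hw hj0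
    obtain ⟨q, hqV, hqorb⟩ := _root_.mem_closure_iff.mp hdd V hVopen ⟨hu, rfl⟩
    obtain ⟨n, hn, rfl⟩ := hqorb
    refine Set.mem_iUnion.mpr ⟨n - 1, ?_⟩
    have : n - 1 + 1 = n := by omega
    rw [Set.mem_preimage, this]
    exact hqV
  obtain ⟨s, hs⟩ := hWcl.isCompact.elim_finite_subcover
    (fun n : ℕ => G^[n + 1] ⁻¹' V)
    (fun n => hVopen.preimage (hGcont.iterate _)) hcover
  set N : ℕ := s.sup id with hN
  -- thickness of H i for i corresponding to j0
  have hival : (j0.val : ℕ) < k := ZMod.val_lt j0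
  set i : Fin k := ⟨j0.val, hival⟩ with hi
  obtain ⟨t0, ht0pos, ht0⟩ := hH i (Finset.range (N + 2))
  -- the orbit point G^[t0] z lies in W
  have hwt : G^[t0] z ∈ W := subset_closure ⟨t0, ht0pos, rfl⟩
  obtain ⟨n, hns, hnV⟩ := Set.mem_iUnion₂.mp (hs hwt)
  set r : ℕ := n + 1 + t0 with hr
  have hrV : G^[r] z ∈ V := by
    have hnV' : G^[n + 1] (G^[t0] z) ∈ V := hnV
    have heq : G^[n + 1] (G^[t0] z) = G^[r] z := by
      rw [← Function.iterate_add_apply]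
    rwa [heq] at hnV'
  rw [hGiter] at hrV
  obtain ⟨hrU, hrj⟩ := hrV
  have hrj' : ((r : ℕ) : ZMod k) = j0 := by simpa [hz] using hrj
  have hrmod : r % k = (i : ℕ) := by
    have := ZMod.val_natCast (n := k) r
    rw [hrj'] at this
    simpa [hi] using this.symm
  have hrH : r ∈ H i := by
    have hn1 : n + 1 ∈ Finset.range (N + 2) := by
      have : n ≤ N := Finset.le_sup (f := id) hns
      simp only [Finset.mem_range]
      omega
    have := ht0 (n + 1) hn1
    simpa [hr] using this
  refine ⟨r, ?_, by omega, hrU⟩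
  exact Set.mem_iUnion.mpr ⟨i, ⟨hrmod, hrH⟩⟩
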